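/- Let (X,d_g) be a compact metric space in which closed balls are compact, d another metric on X such that the identity (X,d_g) → (X,d) is continuous and an η-quasisymmetry, and ε > 0. Suppose (X,d_g) is a length space. Then the function λ_ε(p) := (max over q ∈ closed ball B̄(p,ε) of d(p,q))/ε is continuous on X. -/

import Mathlib

/-- `d` is a metric on `X`. -/
def IsMetric {X : Type*} (d : X → X → ℝ) : Prop :=
  (∀ x, d x x = 0) ∧ (∀ x y, d x y = 0 → x = y) ∧ (∀ x y, d x y = d y x) ∧
    ∀ x y z, d x z ≤ d x y + d y z

/-- The distortion function `λ_ε(p) = ε⁻¹ max{d(p,q) : q ∈ B̄(p,ε)}` is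
continuous, when `(X,d_g)` is a compact length space and the identity
`(X,d_g) → (X,d)` is a continuous `η`-quasisymmetry. -/
theorem stmt7 {X : Type*} [MetricSpace X] [CompactSpace X]
    (d : X → X → ℝ) (hd : IsMetric d)
    (hcont : Continuous fun pq : X × X => d pq.1 pq.2)
    (η : ℝ → ℝ)
    (hqs : ∀ p q s : X, q ≠ s → d p q ≤ η (dist p q / dist q s) * d q s)
    (hlen : ∀ (x y : X) (δ : ℝ), 0 < δ → ∃ f : ℝ → X, f 0 = x ∧ f 1 = y ∧
      ∀ s ∈ Set.Icc (0:ℝ) 1, ∀ t ∈ Set.Icc (0:ℝ) 1,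
        dist (f s) (f t) ≤ (dist x y + δ) * |s - t|)
    (ε : ℝ) (hε : 0 < ε) :
    Continuous fun p : X =>
      (sSup {v | ∃ q ∈ Metric.closedBall p ε, v = d p q}) / ε := by
  classical
  have huc : UniformContinuous fun pq : X × X => d pq.1 pq.2 :=
    CompactSpace.uniformContinuous_of_continuous hcont
  obtain ⟨C, hC⟩ : BddAbove (Set.range fun pq : X × X => d pq.1 pq.2) := by
    have := (isCompact_univ (X := X × X)).bddAbove_image hcont.continuousOn
    simpa [Set.image_univ] using this
  let S : X → Set ℝ := fun p => {v | ∃ q ∈ Metric.closedBall p ε, v = d p q}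
  have hne : ∀ p, (S p).Nonempty := fun p =>
    ⟨d p p, p, Metric.mem_closedBall_self hε.le, rfl⟩
  have hbdd : ∀ p, BddAbove (S p) := by
    intro p
    refine ⟨C, ?_⟩
    rintro v ⟨q, _, rfl⟩
    exact hC ⟨(p, q), rfl⟩
  have key : ∀ e : ℝ, 0 < e → ∃ δ > 0, ∀ p p' : X, dist p p' < δ →
      sSup (S p) ≤ sSup (S p') + e := by
    intro e he
    obtain ⟨δ₀, hδ₀, hmod⟩ := Metric.uniformContinuous_iff.mp huc e he
    refine ⟨δ₀ / 2, by positivity, fun p p' hpp' => ?_⟩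
    refine csSup_le (hne p) ?_
    rintro v ⟨q, hq, rfl⟩
    rw [Metric.mem_closedBall] at hq
    obtain ⟨q', hq'ball, hq'close⟩ : ∃ q', q' ∈ Metric.closedBall p' ε ∧
        dist q q' < δ₀ := by
      by_cases hcase : dist p' q ≤ ε
      · exact ⟨q, by simpa [Metric.mem_closedBall, dist_comm] using hcase,
          by simpa using hδ₀⟩
      · push_neg at hcase
        obtain ⟨f, hf0, hf1, hfl⟩ := hlen p' q (δ₀ / 4) (by positivity)
        set L := dist p' q + δ₀ / 4 with hL
        have hLpos : 0 < L := by
          have := dist_nonneg (x := p') (y := q); positivity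
        have hεL : ε < L := by
          have h4 : (0:ℝ) < δ₀ / 4 := by positivity
          calc ε < dist p' q := hcase
            _ ≤ L := by rw [hL]; linarith
        set t : ℝ := ε / L with ht
        have ht0 : 0 ≤ t := by positivity
        have ht1 : t ≤ 1 := by
          rw [ht, div_le_one hLpos]; exact hεL.le
        have htmem : t ∈ Set.Icc (0:ℝ) 1 := ⟨ht0, ht1⟩
        refine ⟨f t, ?_, ?_⟩
        · have h := hfl 0 ⟨le_refl 0, zero_le_one⟩ t htmem
          rw [hf0] at h
          have habs : |(0:ℝ) - t| = t := by
            rw [abs_sub_comm]; simpa using abs_of_nonneg ht0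
          rw [habs] at h
          rw [Metric.mem_closedBall]
          calc dist (f t) p' = dist p' (f t) := dist_comm _ _
            _ ≤ L * t := h
            _ = ε := by rw [ht]; field_simp
        · have h := hfl 1 ⟨zero_le_one, le_refl 1⟩ t htmem
          rw [hf1] at h
          have habs : |(1:ℝ) - t| = 1 - t := abs_of_nonneg (by linarith)
          rw [habs] at h
          have hLt : L * (1 - t) = L - ε := by
            rw [ht]; field_simp
          have hpq : dist p' q ≤ dist p' p + ε := by
            calc dist p' q ≤ dist p' p + dist p q := dist_triangle _ _ _
              _ ≤ dist p' p + ε := by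
                  have : dist p q ≤ ε := by rwa [dist_comm] at hq
                  linarith
          have hdpp : dist p' p < δ₀ / 2 := by rwa [dist_comm] at hpp'
          calc dist q (f t) ≤ L * (1 - t) := h
            _ = L - ε := hLt
            _ = dist p' q + δ₀ / 4 - ε := by rw [hL]
            _ ≤ dist p' p + δ₀ / 4 := by linarith
            _ < δ₀ := by linarith
    have hprod : dist ((p, q) : X × X) (p', q') < δ₀ := by
      rw [Prod.dist_eq]
      exact max_lt (by linarith) hq'close
    have hlt : d p q < d p' q' + e := by
      have h := hmod hprod
      rw [Real.dist_eq, abs_sub_lt_iff] at h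
      linarith [h.1]
    have hmem : d p' q' ∈ S p' := ⟨q', hq'ball, rfl⟩
    exact hlt.le.trans (add_le_add_left (le_csSup (hbdd p') hmem) e)
  have hFcont : Continuous fun p => sSup (S p) := by
    rw [Metric.continuous_iff]
    intro p e he
    obtain ⟨δ, hδ, hkey⟩ := key (e / 2) (by positivity)
    refine ⟨δ, hδ, fun p' hp' => ?_⟩
    have h1 := hkey p p' (by rwa [dist_comm])
    have h2 := hkey p' p hp'
    rw [Real.dist_eq, abs_sub_lt_iff]
    constructor <;> linarith
  exact hFcont.div_const ε
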